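/- Let G = (V,E) be a finite simple graph and let b be a natural number with b ≤ |V|. Then G has a vertex cover of size at most |V| − b if and only if there exists a set S ⊆ V(G^×) such that the number of edges of G^× with exactly one endpoint in S is at least 4|E| + b. -/

import Mathlib

set_option linter.unusedSectionVars false


/-- The graph `G^×` for the Max-Cut reduction: vertices are the original vertices
(`Sum.inl`), one new vertex `x` (`Sum.inr (Sum.inl ())`), and for each edge
`e = {u, v}` of `G` two new vertices `e_u, e_v`, encoded as the darts of `G`
(the dart `(u, v)` plays the role of `e_u`). Edges: `{x, v}` for every original `v`,
and for every edge `e = {u,v}` the five edges `{x, e_u}`, `{x, e_v}`, `{e_u, e_v}`,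
`{e_u, u}`, `{e_v, v}`. -/
def maxCutGraph {α : Type*} (G : SimpleGraph α) : SimpleGraph (α ⊕ (Unit ⊕ G.Dart)) :=
  SimpleGraph.fromRel fun x y =>
    match x, y with
    | Sum.inr (Sum.inl _), Sum.inl _ => True
    | Sum.inr (Sum.inl _), Sum.inr (Sum.inr _) => True
    | Sum.inr (Sum.inr d), Sum.inr (Sum.inr d') => d' = d.symm
    | Sum.inr (Sum.inr d), Sum.inl a => a = d.toProd.1
    | _, _ => False

namespace MaxCut17
open SimpleGraph Finset

variable {α : Type*} {G : SimpleGraph α}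

def X (G : SimpleGraph α) : α ⊕ (Unit ⊕ G.Dart) := Sum.inr (Sum.inl ())

def D (d : G.Dart) : α ⊕ (Unit ⊕ G.Dart) := Sum.inr (Sum.inr d)

lemma adj_X_inl (a : α) : (maxCutGraph G).Adj (X G) (Sum.inl a) := by
  simp [maxCutGraph, SimpleGraph.fromRel_adj, X]

lemma adj_X_D (d : G.Dart) : (maxCutGraph G).Adj (X G) (D d) := by
  simp [maxCutGraph, SimpleGraph.fromRel_adj, X, D]

lemma adj_D_symm (d : G.Dart) : (maxCutGraph G).Adj (D d) (D d.symm) := by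
  simp only [maxCutGraph, SimpleGraph.fromRel_adj, D]
  exact ⟨by simpa using (SimpleGraph.Dart.symm_ne d).symm, Or.inl trivial⟩

lemma adj_D_inl (d : G.Dart) : (maxCutGraph G).Adj (D d) (Sum.inl d.fst) := by
  simp [maxCutGraph, SimpleGraph.fromRel_adj, D]

lemma adj_cases {p q : α ⊕ (Unit ⊕ G.Dart)} (h : (maxCutGraph G).Adj p q) :
    (∃ a, (p = X G ∧ q = Sum.inl a) ∨ (q = X G ∧ p = Sum.inl a)) ∨
    (∃ d, (p = X G ∧ q = D d) ∨ (q = X G ∧ p = D d)) ∨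
    (∃ d : G.Dart, (p = D d ∧ q = D d.symm)) ∨
    (∃ d : G.Dart, (p = D d ∧ q = Sum.inl d.fst) ∨ (q = D d ∧ p = Sum.inl d.fst)) := by
  rw [maxCutGraph, SimpleGraph.fromRel_adj] at h
  obtain ⟨hne, h | h⟩ := h <;>
    rcases p with a | u | d <;> rcases q with b | u' | d' <;> simp_all [X, D]


def cut (G : SimpleGraph α) (S : Set (α ⊕ (Unit ⊕ G.Dart))) :
    Set (Sym2 (α ⊕ (Unit ⊕ G.Dart))) :=
  {e | ∃ x y, (maxCutGraph G).Adj x y ∧ x ∈ S ∧ y ∉ S ∧ e = s(x, y)}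

lemma cut_compl (S : Set (α ⊕ (Unit ⊕ G.Dart))) : cut G Sᶜ = cut G S := by
  ext e
  constructor <;> rintro ⟨x, y, h, hx, hy, rfl⟩
  · exact ⟨y, x, h.symm, by simpa using hy, by simpa using hx, Sym2.eq_swap⟩
  · exact ⟨y, x, h.symm, by simpa using hy, by simpa using hx, Sym2.eq_swap⟩

lemma mem_cut_iff {S : Set (α ⊕ (Unit ⊕ G.Dart))} {p q : α ⊕ (Unit ⊕ G.Dart)}
    (h : (maxCutGraph G).Adj p q) :
    s(p, q) ∈ cut G S ↔ ((p ∈ S ∧ q ∉ S) ∨ (q ∈ S ∧ p ∉ S)) := by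
  constructor
  · rintro ⟨x, y, hxy, hx, hy, he⟩
    rw [Sym2.eq_iff] at he
    rcases he with ⟨rfl, rfl⟩ | ⟨rfl, rfl⟩ <;> tauto
  · rintro (⟨h1, h2⟩ | ⟨h1, h2⟩)
    · exact ⟨p, q, h, h1, h2, rfl⟩
    · exact ⟨q, p, h.symm, h1, h2, Sym2.eq_swap⟩

/-- classification of potential cut edges -/
def cls : Sym2 (α ⊕ (Unit ⊕ G.Dart)) → Option (α ⊕ Sym2 α) :=
  Sym2.lift ⟨fun p q =>
    match p, q with
    | Sum.inl a, Sum.inl b => some (Sum.inr s(a, b))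
    | Sum.inl a, Sum.inr (Sum.inl _) => some (Sum.inl a)
    | Sum.inr (Sum.inl _), Sum.inl a => some (Sum.inl a)
    | Sum.inl _, Sum.inr (Sum.inr d) => some (Sum.inr d.edge)
    | Sum.inr (Sum.inr d), Sum.inl _ => some (Sum.inr d.edge)
    | Sum.inr (Sum.inl _), Sum.inr (Sum.inr d) => some (Sum.inr d.edge)
    | Sum.inr (Sum.inr d), Sum.inr (Sum.inl _) => some (Sum.inr d.edge)
    | Sum.inr (Sum.inr d), Sum.inr (Sum.inr d') => some (Sum.inr s(d.fst, d'.fst))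
    | Sum.inr (Sum.inl _), Sum.inr (Sum.inl _) => none,
   by
    rintro (a | u | d) (b | u' | d') <;> simp [Sym2.eq_swap]⟩

@[simp] lemma cls_X_inl (a : α) : cls (G := G) s(X G, Sum.inl a) = some (Sum.inl a) := rfl
@[simp] lemma cls_X_D (d : G.Dart) : cls s(X G, D d) = some (Sum.inr d.edge) := rfl
@[simp] lemma cls_D_D (d d' : G.Dart) :
    cls s(D d, D d') = some (Sum.inr s(d.fst, d'.fst)) := rfl
@[simp] lemma cls_D_inl (d : G.Dart) (a : α) :
    cls s(D d, Sum.inl a) = some (Sum.inr d.edge) := rfl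

lemma cls_D_Dsymm (d : G.Dart) :
    cls s(D d, D d.symm) = some (Sum.inr d.edge) := by
  simp [Sym2.eq_iff, SimpleGraph.Dart.edge]


@[simp] lemma cls_inl_X (a : α) : cls (G := G) s(Sum.inl a, X G) = some (Sum.inl a) := rfl
@[simp] lemma cls_D_X (d : G.Dart) : cls s(D d, X G) = some (Sum.inr d.edge) := rfl
@[simp] lemma cls_inl_D (d : G.Dart) (a : α) :
    cls s(Sum.inl a, D d) = some (Sum.inr d.edge) := rfl

lemma cut_cls_inl {S : Set (α ⊕ (Unit ⊕ G.Dart))} {e : Sym2 (α ⊕ (Unit ⊕ G.Dart))}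
    (he : e ∈ cut G S) {a : α} (hc : cls e = some (Sum.inl a)) : e = s(X G, Sum.inl a) := by
  obtain ⟨p, q, h, -, -, rfl⟩ := he
  rcases adj_cases h with ⟨a', ⟨rfl, rfl⟩ | ⟨rfl, rfl⟩⟩ | ⟨d, ⟨rfl, rfl⟩ | ⟨rfl, rfl⟩⟩ |
    ⟨d, rfl, rfl⟩ | ⟨d, ⟨rfl, rfl⟩ | ⟨rfl, rfl⟩⟩
  · simp only [cls_X_inl, Option.some.injEq, Sum.inl.injEq] at hc; rw [hc]
  · simp only [cls_inl_X, Option.some.injEq, Sum.inl.injEq] at hc; rw [hc]; exact Sym2.eq_swap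
  · simp at hc
  · simp at hc
  · rw [cls_D_Dsymm] at hc; simp at hc
  · simp at hc
  · simp at hc

lemma cut_cls_inr {S : Set (α ⊕ (Unit ⊕ G.Dart))} {e : Sym2 (α ⊕ (Unit ⊕ G.Dart))}
    (he : e ∈ cut G S) {ed : Sym2 α} (hc : cls e = some (Sum.inr ed)) :
    ∃ d : G.Dart, d.edge = ed ∧
      (e = s(X G, D d) ∨ e = s(D d, D d.symm) ∨ e = s(D d, Sum.inl d.fst)) := by
  obtain ⟨p, q, h, -, -, rfl⟩ := he
  rcases adj_cases h with ⟨a', ⟨rfl, rfl⟩ | ⟨rfl, rfl⟩⟩ | ⟨d, ⟨rfl, rfl⟩ | ⟨rfl, rfl⟩⟩ |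
    ⟨d, rfl, rfl⟩ | ⟨d, ⟨rfl, rfl⟩ | ⟨rfl, rfl⟩⟩
  · simp at hc
  · simp at hc
  · simp only [cls_X_D, Option.some.injEq, Sum.inr.injEq] at hc
    exact ⟨d, hc, Or.inl rfl⟩
  · simp only [cls_D_X, Option.some.injEq, Sum.inr.injEq] at hc
    exact ⟨d, hc, Or.inl Sym2.eq_swap⟩
  · rw [cls_D_Dsymm] at hc
    simp only [Option.some.injEq, Sum.inr.injEq] at hc
    exact ⟨d, hc, Or.inr (Or.inl rfl)⟩
  · simp only [cls_D_inl, Option.some.injEq, Sum.inr.injEq] at hc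
    exact ⟨d, hc, Or.inr (Or.inr rfl)⟩
  · simp only [cls_inl_D, Option.some.injEq, Sum.inr.injEq] at hc
    exact ⟨d, hc, Or.inr (Or.inr Sym2.eq_swap)⟩

lemma cut_cls_shape {S : Set (α ⊕ (Unit ⊕ G.Dart))} {e : Sym2 (α ⊕ (Unit ⊕ G.Dart))}
    (he : e ∈ cut G S) :
    (∃ a, cls e = some (Sum.inl a)) ∨ (∃ d : G.Dart, cls e = some (Sum.inr d.edge)) := by
  obtain ⟨p, q, h, -, -, rfl⟩ := he
  rcases adj_cases h with ⟨a', ⟨rfl, rfl⟩ | ⟨rfl, rfl⟩⟩ | ⟨d, ⟨rfl, rfl⟩ | ⟨rfl, rfl⟩⟩ |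
    ⟨d, rfl, rfl⟩ | ⟨d, ⟨rfl, rfl⟩ | ⟨rfl, rfl⟩⟩
  · exact Or.inl ⟨a', by simp⟩
  · exact Or.inl ⟨a', by simp⟩
  · exact Or.inr ⟨d, by simp⟩
  · exact Or.inr ⟨d, by simp⟩
  · exact Or.inr ⟨d, cls_D_Dsymm d⟩
  · exact Or.inr ⟨d, by simp⟩
  · exact Or.inr ⟨d, by simp⟩

open scoped Classical

variable [Fintype α]

noncomputable def gadget5 (d : G.Dart) : Finset (Sym2 (α ⊕ (Unit ⊕ G.Dart))) :=
  {s(X G, D d), s(X G, D d.symm), s(D d, D d.symm),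
   s(D d, Sum.inl d.fst), s(D d.symm, Sum.inl d.symm.fst)}

lemma fiber_subset_gadget5 {S : Set (α ⊕ (Unit ⊕ G.Dart))} (d : G.Dart)
    {e : Sym2 (α ⊕ (Unit ⊕ G.Dart))} (he : e ∈ cut G S)
    (hc : cls e = some (Sum.inr d.edge)) : e ∈ gadget5 d := by
  obtain ⟨d', hd', he'⟩ := cut_cls_inr he hc
  rw [SimpleGraph.dart_edge_eq_iff] at hd'
  rcases hd' with rfl | rfl
  · rcases he' with rfl | rfl | rfl <;> simp [gadget5]
  · rcases he' with rfl | rfl | rfl <;> simp only [gadget5, SimpleGraph.Dart.symm_symm,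
      Finset.mem_insert, Finset.mem_singleton]
    · tauto
    · rw [Sym2.eq_swap (a := D d.symm)]; tauto
    · tauto
lemma card5_le {β : Type*} [DecidableEq β] (a b c d e : β) :
    ({a, b, c, d, e} : Finset β).card ≤ 5 := by
  refine (Finset.card_insert_le _ _).trans (Nat.succ_le_succ ?_)
  refine (Finset.card_insert_le _ _).trans (Nat.succ_le_succ ?_)
  refine (Finset.card_insert_le _ _).trans (Nat.succ_le_succ ?_)
  refine (Finset.card_insert_le _ _).trans (Nat.succ_le_succ ?_)
  simp

lemma four_le_card {β : Type*} [DecidableEq β] {s : Finset β} {a b c d : β}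
    (ha : a ∈ s) (hb : b ∈ s) (hc : c ∈ s) (hd : d ∈ s)
    (hab : a ≠ b) (hac : a ≠ c) (had : a ≠ d) (hbc : b ≠ c) (hbd : b ≠ d) (hcd : c ≠ d) :
    4 ≤ s.card := by
  have hsub : ({a, b, c, d} : Finset β) ⊆ s := by
    intro x hx
    simp only [Finset.mem_insert, Finset.mem_singleton] at hx
    rcases hx with rfl | rfl | rfl | rfl <;> assumption
  have hcard : ({a, b, c, d} : Finset β).card = 4 := by
    rw [Finset.card_insert_of_notMem (by simp [hab, hac, had]),
      Finset.card_insert_of_notMem (by simp [hbc, hbd]),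
      Finset.card_insert_of_notMem (by simp [hcd]), Finset.card_singleton]
  exact hcard ▸ Finset.card_le_card hsub

noncomputable def fib (S : Set (α ⊕ (Unit ⊕ G.Dart))) (b : Option (α ⊕ Sym2 α)) : ℕ :=
  ((cut G S).toFinset.filter (fun e => cls e = b)).card

lemma fib_inl_le_one (S : Set (α ⊕ (Unit ⊕ G.Dart))) (a : α) :
    fib S (some (Sum.inl a)) ≤ 1 := by
  refine Finset.card_le_one.mpr fun e he e' he' => ?_
  rw [Finset.mem_filter, Set.mem_toFinset] at he he'
  rw [cut_cls_inl he.1 he.2, cut_cls_inl he'.1 he'.2]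

lemma fib_inl_eq_zero {S : Set (α ⊕ (Unit ⊕ G.Dart))} {a : α}
    (hX : X G ∉ S) (ha : Sum.inl a ∉ S) : fib S (some (Sum.inl a)) = 0 := by
  rw [fib, Finset.card_eq_zero, Finset.eq_empty_iff_forall_notMem]
  intro e he
  rw [Finset.mem_filter, Set.mem_toFinset] at he
  have := cut_cls_inl he.1 he.2
  subst this
  rw [mem_cut_iff (adj_X_inl a)] at he
  tauto

lemma one_le_fib_inl {S : Set (α ⊕ (Unit ⊕ G.Dart))} {a : α}
    (hX : X G ∉ S) (ha : Sum.inl a ∈ S) : 1 ≤ fib S (some (Sum.inl a)) := by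
  refine Finset.card_pos.mpr ⟨s(X G, Sum.inl a), ?_⟩
  rw [Finset.mem_filter, Set.mem_toFinset, mem_cut_iff (adj_X_inl a)]
  exact ⟨Or.inr ⟨ha, hX⟩, by simp⟩

lemma fib_le_four_of {S : Set (α ⊕ (Unit ⊕ G.Dart))} (d : G.Dart)
    {z : Sym2 (α ⊕ (Unit ⊕ G.Dart))} (hz : z ∈ gadget5 d) (hzK : z ∉ cut G S) :
    fib S (some (Sum.inr d.edge)) ≤ 4 := by
  have hsub : (cut G S).toFinset.filter (fun e => cls e = some (Sum.inr d.edge)) ⊆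
      (gadget5 d).erase z := by
    intro e he
    rw [Finset.mem_filter, Set.mem_toFinset] at he
    refine Finset.mem_erase.mpr ⟨fun h => hzK (h ▸ he.1), fiber_subset_gadget5 d he.1 he.2⟩
  refine (Finset.card_le_card hsub).trans ?_
  rw [Finset.card_erase_of_mem hz]
  have h5 : (gadget5 d).card ≤ 5 := by
    rw [gadget5]; exact card5_le _ _ _ _ _
  omega

lemma fib_le_three_of {S : Set (α ⊕ (Unit ⊕ G.Dart))} (d : G.Dart)
    {z w : Sym2 (α ⊕ (Unit ⊕ G.Dart))} (hz : z ∈ gadget5 d) (hw : w ∈ gadget5 d)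
    (hzw : z ≠ w) (hzK : z ∉ cut G S) (hwK : w ∉ cut G S) :
    fib S (some (Sum.inr d.edge)) ≤ 3 := by
  have hsub : (cut G S).toFinset.filter (fun e => cls e = some (Sum.inr d.edge)) ⊆
      ((gadget5 d).erase z).erase w := by
    intro e he
    rw [Finset.mem_filter, Set.mem_toFinset] at he
    refine Finset.mem_erase.mpr ⟨fun h => hwK (h ▸ he.1), Finset.mem_erase.mpr
      ⟨fun h => hzK (h ▸ he.1), fiber_subset_gadget5 d he.1 he.2⟩⟩
  refine (Finset.card_le_card hsub).trans ?_
  rw [Finset.card_erase_of_mem (Finset.mem_erase.mpr ⟨hzw.symm, hw⟩),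
    Finset.card_erase_of_mem hz]
  have h5 : (gadget5 d).card ≤ 5 := by
    rw [gadget5]; exact card5_le _ _ _ _ _
  omega
lemma fib_edge_le_four {S : Set (α ⊕ (Unit ⊕ G.Dart))} (hX : X G ∉ S) (d : G.Dart) :
    fib S (some (Sum.inr d.edge)) ≤ 4 := by
  by_cases hd : D d ∈ S <;> by_cases hds : D d.symm ∈ S
  · exact fib_le_four_of d (z := s(D d, D d.symm)) (by simp [gadget5])
      (by rw [mem_cut_iff (adj_D_symm d)]; tauto)
  · exact fib_le_four_of d (z := s(X G, D d.symm)) (by simp [gadget5])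
      (by rw [mem_cut_iff (adj_X_D d.symm)]; tauto)
  · exact fib_le_four_of d (z := s(X G, D d)) (by simp [gadget5])
      (by rw [mem_cut_iff (adj_X_D d)]; tauto)
  · exact fib_le_four_of d (z := s(X G, D d)) (by simp [gadget5])
      (by rw [mem_cut_iff (adj_X_D d)]; tauto)

lemma fib_edge_le_three {S : Set (α ⊕ (Unit ⊕ G.Dart))} (hX : X G ∉ S) (d : G.Dart)
    (hu : Sum.inl d.fst ∈ S) (hv : Sum.inl d.symm.fst ∈ S) :
    fib S (some (Sum.inr d.edge)) ≤ 3 := by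
  have hne : d ≠ d.symm := fun h => d.symm_ne h.symm
  by_cases hd : D d ∈ S <;> by_cases hds : D d.symm ∈ S
  · exact fib_le_three_of d (z := s(D d, D d.symm)) (w := s(D d, Sum.inl d.fst))
      (by simp [gadget5]) (by simp [gadget5]) (by simp [Sym2.eq_iff, X, D])
      (by rw [mem_cut_iff (adj_D_symm d)]; tauto)
      (by rw [mem_cut_iff (adj_D_inl d)]; tauto)
  · exact fib_le_three_of d (z := s(X G, D d.symm)) (w := s(D d, Sum.inl d.fst))
      (by simp [gadget5]) (by simp [gadget5]) (by simp [Sym2.eq_iff, X, D])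
      (by rw [mem_cut_iff (adj_X_D d.symm)]; tauto)
      (by rw [mem_cut_iff (adj_D_inl d)]; tauto)
  · exact fib_le_three_of d (z := s(X G, D d)) (w := s(D d.symm, Sum.inl d.symm.fst))
      (by simp [gadget5]) (by simp [gadget5]) (by simp [Sym2.eq_iff, X, D])
      (by rw [mem_cut_iff (adj_X_D d)]; tauto)
      (by rw [mem_cut_iff (adj_D_inl d.symm)]; tauto)
  · exact fib_le_three_of d (z := s(X G, D d)) (w := s(X G, D d.symm))
      (by simp [gadget5]) (by simp [gadget5]) (by simp [Sym2.eq_iff, X, D, hne])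
      (by rw [mem_cut_iff (adj_X_D d)]; tauto)
      (by rw [mem_cut_iff (adj_X_D d.symm)]; tauto)

lemma four_le_fib {S : Set (α ⊕ (Unit ⊕ G.Dart))} (hX : X G ∉ S) (d : G.Dart)
    (hcase : (D d ∈ S ∧ D d.symm ∈ S ∧ Sum.inl d.fst ∉ S ∧ Sum.inl d.symm.fst ∉ S)
      ∨ (D d ∉ S ∧ D d.symm ∈ S ∧ Sum.inl d.fst ∈ S ∧ Sum.inl d.symm.fst ∉ S)) :
    4 ≤ fib S (some (Sum.inr d.edge)) := by
  have hne : d ≠ d.symm := fun h => d.symm_ne h.symm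
  rcases hcase with ⟨hd, hds, hu, hv⟩ | ⟨hd, hds, hu, hv⟩
  · refine four_le_card (s := (cut G S).toFinset.filter (fun e => cls e = some (Sum.inr d.edge)))
      (a := s(X G, D d)) (b := s(X G, D d.symm)) (c := s(D d, Sum.inl d.fst))
      (d := s(D d.symm, Sum.inl d.symm.fst)) ?_ ?_ ?_ ?_ ?_ ?_ ?_ ?_ ?_ ?_
    · rw [Finset.mem_filter, Set.mem_toFinset, mem_cut_iff (adj_X_D d)]
      exact ⟨by tauto, by simp⟩
    · rw [Finset.mem_filter, Set.mem_toFinset, mem_cut_iff (adj_X_D d.symm)]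
      exact ⟨by tauto, by simp⟩
    · rw [Finset.mem_filter, Set.mem_toFinset, mem_cut_iff (adj_D_inl d)]
      exact ⟨by tauto, by simp⟩
    · rw [Finset.mem_filter, Set.mem_toFinset, mem_cut_iff (adj_D_inl d.symm)]
      exact ⟨by tauto, by simp⟩
    · simp [Sym2.eq_iff, X, D, hne]
    · simp [Sym2.eq_iff, X, D]
    · simp [Sym2.eq_iff, X, D]
    · simp [Sym2.eq_iff, X, D]
    · simp [Sym2.eq_iff, X, D]
    · simp [Sym2.eq_iff, X, D, hne]
  · refine four_le_card (s := (cut G S).toFinset.filter (fun e => cls e = some (Sum.inr d.edge)))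
      (a := s(X G, D d.symm)) (b := s(D d, D d.symm)) (c := s(D d, Sum.inl d.fst))
      (d := s(D d.symm, Sum.inl d.symm.fst)) ?_ ?_ ?_ ?_ ?_ ?_ ?_ ?_ ?_ ?_
    · rw [Finset.mem_filter, Set.mem_toFinset, mem_cut_iff (adj_X_D d.symm)]
      exact ⟨by tauto, by simp⟩
    · rw [Finset.mem_filter, Set.mem_toFinset, mem_cut_iff (adj_D_symm d)]
      exact ⟨by tauto, cls_D_Dsymm d⟩
    · rw [Finset.mem_filter, Set.mem_toFinset, mem_cut_iff (adj_D_inl d)]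
      exact ⟨by tauto, by simp⟩
    · rw [Finset.mem_filter, Set.mem_toFinset, mem_cut_iff (adj_D_inl d.symm)]
      exact ⟨by tauto, by simp⟩
    · simp [Sym2.eq_iff, X, D]
    · simp [Sym2.eq_iff, X, D]
    · simp [Sym2.eq_iff, X, D]
    · simp [Sym2.eq_iff, X, D]
    · simp [Sym2.eq_iff, X, D, hne]
    · simp [Sym2.eq_iff, X, D]
lemma cut_ncard_eq (S : Set (α ⊕ (Unit ⊕ G.Dart))) :
    (cut G S).ncard =
      (∑ a : α, fib S (some (Sum.inl a))) +
        ∑ e ∈ G.edgeFinset, fib S (some (Sum.inr e)) := by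
  rw [Set.ncard_eq_toFinset_card']
  rw [Finset.card_eq_sum_card_fiberwise (f := cls)
    (t := (Finset.univ.image fun a : α => some (Sum.inl a : α ⊕ Sym2 α)) ∪
      (G.edgeFinset.image fun e => some (Sum.inr e : α ⊕ Sym2 α)))]
  · rw [Finset.sum_union, Finset.sum_image, Finset.sum_image]
    · rfl
    · intro e _ e' _ h
      simpa using h
    · intro a _ a' _ h
      simpa using h
    · rw [Finset.disjoint_left]
      rintro x hx hx'
      simp only [Finset.mem_image] at hx hx'
      obtain ⟨a, -, rfl⟩ := hx
      obtain ⟨e, -, he⟩ := hx'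
      simp at he
  · intro e he
    rw [Finset.mem_coe, Set.mem_toFinset] at he
    rcases cut_cls_shape he with ⟨a, ha⟩ | ⟨d, hd⟩
    · rw [ha]
      exact Finset.mem_union_left _ (Finset.mem_image.mpr ⟨a, Finset.mem_univ a, rfl⟩)
    · rw [hd]
      exact Finset.mem_union_right _
        (Finset.mem_image.mpr ⟨d.edge, by simp, rfl⟩)
lemma edge_ncard_eq : G.edgeSet.ncard = G.edgeFinset.card :=
  Set.ncard_eq_toFinset_card' _

lemma key_upper {S : Set (α ⊕ (Unit ⊕ G.Dart))} (hX : X G ∉ S) :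
    (cut G S).ncard +
        (G.edgeFinset.filter (fun e => ∀ a ∈ e, Sum.inl a ∈ S)).card ≤
      (Finset.univ.filter (fun a => Sum.inl a ∈ S)).card + 4 * G.edgeFinset.card := by
  rw [cut_ncard_eq]
  have h1 : ∑ a : α, fib S (some (Sum.inl a)) ≤
      (Finset.univ.filter (fun a => Sum.inl a ∈ S)).card := by
    rw [Finset.card_filter]
    refine Finset.sum_le_sum fun a _ => ?_
    by_cases hA : Sum.inl a ∈ S
    · rw [if_pos hA]; exact fib_inl_le_one S a
    · rw [if_neg hA]; exact le_of_eq (fib_inl_eq_zero hX hA)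
  have h2 : (∑ e ∈ G.edgeFinset, fib S (some (Sum.inr e))) +
      (G.edgeFinset.filter (fun e => ∀ a ∈ e, Sum.inl a ∈ S)).card ≤
      4 * G.edgeFinset.card := by
    rw [Finset.card_filter, ← Finset.sum_add_distrib]
    have hpt : ∀ e ∈ G.edgeFinset,
        fib S (some (Sum.inr e)) + (if ∀ a ∈ e, Sum.inl a ∈ S then 1 else 0) ≤ 4 := by
      intro e he
      induction e using Sym2.ind with
      | _ u v =>
        have hadj : G.Adj u v := by
          rwa [SimpleGraph.mem_edgeFinset, SimpleGraph.mem_edgeSet] at he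
        have hd : G.Dart := ⟨(u, v), hadj⟩
        by_cases hbad : ∀ a ∈ s(u, v), Sum.inl a ∈ S
        · rw [if_pos hbad]
          have h3 : fib S (some (Sum.inr s(u, v))) ≤ 3 :=
            fib_edge_le_three hX (⟨(u, v), hadj⟩ : G.Dart)
              (hbad u (by simp)) (hbad v (by simp))
          omega
        · rw [if_neg hbad]
          have h4 : fib S (some (Sum.inr s(u, v))) ≤ 4 :=
            fib_edge_le_four hX (⟨(u, v), hadj⟩ : G.Dart)
          omega
    calc ∑ e ∈ G.edgeFinset,
          (fib S (some (Sum.inr e)) + if ∀ a ∈ e, Sum.inl a ∈ S then 1 else 0) ≤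
        ∑ _e ∈ G.edgeFinset, 4 := Finset.sum_le_sum hpt
      _ = 4 * G.edgeFinset.card := by rw [Finset.sum_const, smul_eq_mul, mul_comm]
  omega

lemma reverse_aux (b : ℕ) {S : Set (α ⊕ (Unit ⊕ G.Dart))} (hX : X G ∉ S)
    (h : 4 * G.edgeSet.ncard + b ≤ (cut G S).ncard) :
    ∃ C : Set α, (∀ ⦃x y : α⦄, G.Adj x y → x ∈ C ∨ y ∈ C) ∧
      C.ncard ≤ Fintype.card α - b := by
  have hkey := key_upper hX
  rw [edge_ncard_eq] at h
  set bad := G.edgeFinset.filter (fun e => ∀ a ∈ e, Sum.inl a ∈ S) with hbad_def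
  set A := Finset.univ.filter (fun a : α => Sum.inl a ∈ S) with hA_def
  have hbA : b + bad.card ≤ A.card := by omega
  set Dl := bad.image (fun e => e.out.1) with hDl_def
  have hDl : Dl.card ≤ bad.card := Finset.card_image_le
  set I := A \ Dl with hI_def
  have hbI : b ≤ I.card := le_trans (by omega) (Finset.le_card_sdiff Dl A)
  refine ⟨(↑I : Set α)ᶜ, ?_, ?_⟩
  · intro x y hadj
    by_contra hcon
    push_neg at hcon
    obtain ⟨hx, hy⟩ := hcon
    rw [Set.notMem_compl_iff] at hx hy
    have hxI : x ∈ I := hx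
    have hyI : y ∈ I := hy
    have hxA : Sum.inl x ∈ S := (Finset.mem_filter.mp (Finset.mem_sdiff.mp hxI).1).2
    have hyA : Sum.inl y ∈ S := (Finset.mem_filter.mp (Finset.mem_sdiff.mp hyI).1).2
    have hbadxy : s(x, y) ∈ bad := by
      rw [hbad_def, Finset.mem_filter]
      refine ⟨SimpleGraph.mem_edgeFinset.mpr hadj, fun a ha => ?_⟩
      rcases Sym2.mem_iff.mp ha with rfl | rfl <;> assumption
    have hout : (s(x, y)).out.1 ∈ Dl := Finset.mem_image.mpr ⟨s(x, y), hbadxy, rfl⟩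
    rcases Sym2.mem_iff.mp (Sym2.out_fst_mem s(x, y)) with h' | h'
    · exact (Finset.mem_sdiff.mp hxI).2 (h' ▸ hout)
    · exact (Finset.mem_sdiff.mp hyI).2 (h' ▸ hout)
  · have hcompl := Set.ncard_add_ncard_compl (↑I : Set α)
    rw [Set.ncard_coe_finset, Nat.card_eq_fintype_card] at hcompl
    omega
def mkS (G : SimpleGraph α) (I : Set α) : Set (α ⊕ (Unit ⊕ G.Dart)) :=
  Sum.elim (· ∈ I) (Sum.elim (fun _ => False) (fun d => d.fst ∉ I))

lemma key_lower (I : Set α) (hInd : ∀ ⦃x y : α⦄, G.Adj x y → ¬(x ∈ I ∧ y ∈ I)) :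
    I.ncard + 4 * G.edgeFinset.card ≤ (cut G (mkS G I)).ncard := by
  have hX : X G ∉ mkS G I := fun h => h
  rw [cut_ncard_eq]
  have h1 : I.ncard ≤ ∑ a : α, fib (mkS G I) (some (Sum.inl a)) := by
    have hcard : I.ncard = ∑ a : α, (if a ∈ I then 1 else 0) := by
      rw [← Finset.card_filter, Set.ncard_eq_toFinset_card' I,
        Set.filter_mem_univ_eq_toFinset]
    rw [hcard]
    refine Finset.sum_le_sum fun a _ => ?_
    by_cases ha : a ∈ I
    · rw [if_pos ha]
      exact one_le_fib_inl hX ha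
    · rw [if_neg ha]
      exact Nat.zero_le _
  have h2 : 4 * G.edgeFinset.card ≤
      ∑ e ∈ G.edgeFinset, fib (mkS G I) (some (Sum.inr e)) := by
    rw [show 4 * G.edgeFinset.card = ∑ _e ∈ G.edgeFinset, 4 by
      rw [Finset.sum_const, smul_eq_mul, mul_comm]]
    refine Finset.sum_le_sum fun e he => ?_
    induction e using Sym2.ind with
    | _ u v =>
      have hadj : G.Adj u v := by
        rwa [SimpleGraph.mem_edgeFinset, SimpleGraph.mem_edgeSet] at he
      by_cases hv : v ∈ I
      · have hu : u ∉ I := fun hu => hInd hadj ⟨hu, hv⟩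
        rw [show (s(u, v) : Sym2 α) = (⟨(v, u), hadj.symm⟩ : G.Dart).edge from Sym2.eq_swap]
        exact four_le_fib hX _ (Or.inr ⟨not_not_intro hv, hu, hv, hu⟩)
      · by_cases hu : u ∈ I
        · rw [show (s(u, v) : Sym2 α) = (⟨(u, v), hadj⟩ : G.Dart).edge from rfl]
          exact four_le_fib hX _ (Or.inr ⟨not_not_intro hu, hv, hu, hv⟩)
        · rw [show (s(u, v) : Sym2 α) = (⟨(u, v), hadj⟩ : G.Dart).edge from rfl]
          exact four_le_fib hX _ (Or.inl ⟨hu, hv, hu, hv⟩)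
  omega
lemma forward_aux (I : Set α) (hInd : ∀ ⦃x y : α⦄, G.Adj x y → ¬(x ∈ I ∧ y ∈ I)) :
    I.ncard + 4 * G.edgeSet.ncard ≤ (cut G (mkS G I)).ncard := by
  rw [edge_ncard_eq]; exact key_lower I hInd

lemma reverse_dir (b : ℕ) (S : Set (α ⊕ (Unit ⊕ G.Dart)))
    (h : 4 * G.edgeSet.ncard + b ≤ (cut G S).ncard) :
    ∃ C : Set α, (∀ ⦃x y : α⦄, G.Adj x y → x ∈ C ∨ y ∈ C) ∧
      C.ncard ≤ Fintype.card α - b := by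
  by_cases hX : X G ∈ S
  · exact reverse_aux b (S := Sᶜ) (fun h' => h' hX) (by rwa [cut_compl S])
  · exact reverse_aux b hX h

end MaxCut17

/-- For a finite graph `G = (V, E)` and `b ≤ |V|`: `G` has a vertex
cover of size at most `|V| − b` iff there is a set `S` of vertices of `G^×` whose cut
(the set of edges of `G^×` with exactly one endpoint in `S`) has size at least
`4|E| + b`. -/
theorem stmt_17 {α : Type*} [Fintype α] (G : SimpleGraph α) (b : ℕ)
    (hb : b ≤ Fintype.card α) :
    (∃ C : Set α, (∀ ⦃x y : α⦄, G.Adj x y → x ∈ C ∨ y ∈ C) ∧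
        C.ncard ≤ Fintype.card α - b) ↔
    (∃ S : Set (α ⊕ (Unit ⊕ G.Dart)),
      4 * G.edgeSet.ncard + b ≤
        {e : Sym2 (α ⊕ (Unit ⊕ G.Dart)) | ∃ x y, (maxCutGraph G).Adj x y ∧
          x ∈ S ∧ y ∉ S ∧ e = s(x, y)}.ncard) := by
  classical
  constructor
  · rintro ⟨C, hC, hcard⟩
    have hInd : ∀ ⦃x y : α⦄, G.Adj x y → ¬(x ∈ Cᶜ ∧ y ∈ Cᶜ) := by
      rintro x y h ⟨hx, hy⟩
      rcases hC h with h' | h'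
      · exact hx h'
      · exact hy h'
    refine ⟨MaxCut17.mkS G Cᶜ, ?_⟩
    have hkey := MaxCut17.forward_aux Cᶜ hInd
    have hcompl := Set.ncard_add_ncard_compl C
    rw [Nat.card_eq_fintype_card] at hcompl
    have hgoal : {e : Sym2 (α ⊕ (Unit ⊕ G.Dart)) | ∃ x y, (maxCutGraph G).Adj x y ∧
        x ∈ MaxCut17.mkS G Cᶜ ∧ y ∉ MaxCut17.mkS G Cᶜ ∧ e = s(x, y)} =
        MaxCut17.cut G (MaxCut17.mkS G Cᶜ) := rfl
    rw [hgoal]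
    omega
  · rintro ⟨S, hS⟩
    have hgoal : {e : Sym2 (α ⊕ (Unit ⊕ G.Dart)) | ∃ x y, (maxCutGraph G).Adj x y ∧
        x ∈ S ∧ y ∉ S ∧ e = s(x, y)} = MaxCut17.cut G S := rfl
    rw [hgoal] at hS
    exact MaxCut17.reverse_dir b S hS
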